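/- arXiv:0711.1643 — 4 statements merged into one kernel-verified Lean document; each statement's English description precedes it below -/
import Mathlib

section
/- Let Γ act on (X,ν) by a measure-preserving, essentially free, ergodic action and let π : X → {0,1}^E be a Γ-equivariant Borel map such that ν(U^∞) ≠ 0. Then the cluster equivalence relation R^cl restricted to its infinite locus U^∞ is ergodic (with respect to the normalized restriction of ν to U^∞) if and only if (ν, π) has indistinguishable infinite clusters. -/
open MeasureTheory

/-! Cayley graph setup: `Γ` is generated by the finite (multi)set indexed by `S`
via `gen : S → Γ`.  The Cayley graph has vertex set `Γ` and edge set `S × Γ`,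
the edge `(s, γ)` joining `γ` to `γ * gen s`.  An element `ω : S × Γ → Bool` is
identified with a spanning subgraph of the Cayley graph. -/

/-- The spanning subgraph of the Cayley graph determined by `ω : S × Γ → Bool`. -/
def ωGraph {Γ S : Type*} [Group Γ] (gen : S → Γ) (ω : S × Γ → Bool) :
    SimpleGraph Γ where
  Adj v w := v ≠ w ∧ ∃ e : S × Γ, ω e = true ∧
      ((v = e.2 ∧ w = e.2 * gen e.1) ∨ (w = e.2 ∧ v = e.2 * gen e.1))
  symm := ⟨by
    rintro v w ⟨hvw, e, he, h⟩
    exact ⟨hvw.symm, e, he, h.symm⟩⟩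
  loopless := ⟨by rintro v ⟨hv, -⟩; exact hv rfl⟩

/-- `C : Γ → Bool` is (the indicator function of) an infinite cluster
(connected component) of the subgraph `ω`. -/
def IsInfiniteCluster {Γ S : Type*} [Group Γ] (gen : S → Γ)
    (ω : S × Γ → Bool) (C : Γ → Bool) : Prop :=
  (∃ v : Γ, ∀ w : Γ, C w = true ↔ (ωGraph gen ω).Reachable v w) ∧
  {w : Γ | C w = true}.Infinite

/-- The cluster equivalence relation `R^cl` on `X`, for a `Γ`-action `a` on `X`
and a `Γ`-equivariant map `π : X → {0,1}^E` :  `x R^cl y` iff there is `γ ∈ Γ`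
with `γ⁻¹ · x = y` and the base vertex `o = 1` and `γ · o = γ` lie in the same
cluster of `π x`. -/
def ClusterRel {Γ S X : Type*} [Group Γ] (gen : S → Γ)
    (a : Γ → X → X) (π : X → S × Γ → Bool) (x y : X) : Prop :=
  ∃ γ : Γ, a γ⁻¹ x = y ∧ (ωGraph gen (π x)).Reachable 1 γ

/-- The infinite locus `U^∞`: points whose `R^cl`-class is infinite. -/
def InfiniteLocus {Γ S X : Type*} [Group Γ] (gen : S → Γ)
    (a : Γ → X → X) (π : X → S × Γ → Bool) : Set X :=
  {x : X | {y : X | ClusterRel gen a π x y}.Infinite}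

/-- `(ν, π)` has indistinguishable infinite clusters: for every Borel subset
`A` of `C^cl_∞ = {(x, C) : C an infinite cluster of π x}` invariant under the
diagonal `Γ`-action, the set of `x` admitting both `(x, C) ∈ A` and
`(x, C') ∈ C^cl_∞ \ A` is `ν`-null. -/
def HasIndistinguishableInfiniteClusters {Γ S X : Type*} [Group Γ]
    [MeasurableSpace X] (gen : S → Γ) (a : Γ → X → X) (ν : Measure X)
    (π : X → S × Γ → Bool) : Prop :=
  ∀ A : Set (X × (Γ → Bool)), MeasurableSet A →
    (∀ p ∈ A, IsInfiniteCluster gen (π p.1) p.2) →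
    (∀ (γ : Γ), ∀ p ∈ A, (a γ p.1, fun v : Γ => p.2 (γ⁻¹ * v)) ∈ A) →
    ν {x : X | (∃ C, (x, C) ∈ A) ∧
        (∃ C', IsInfiniteCluster gen (π x) C' ∧ (x, C') ∉ A)} = 0

section GraphAux

variable {Γ S : Type*} [Group Γ]

lemma adjShift (gen : S → Γ) (ω : S × Γ → Bool) (γ u w : Γ) :
    (ωGraph gen (fun e => ω (e.1, γ⁻¹ * e.2))).Adj u w ↔
      (ωGraph gen ω).Adj (γ⁻¹ * u) (γ⁻¹ * w) := by
  constructor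
  · rintro ⟨hne, ⟨s, g⟩, he, h⟩
    refine ⟨fun hc => hne (mul_left_cancel hc), ⟨s, γ⁻¹ * g⟩, he, ?_⟩
    rcases h with ⟨rfl, rfl⟩ | ⟨rfl, rfl⟩
    · exact Or.inl ⟨rfl, by simp [mul_assoc]⟩
    · exact Or.inr ⟨rfl, by simp [mul_assoc]⟩
  · rintro ⟨hne, ⟨s, g⟩, he, h⟩
    refine ⟨fun hc => hne (by rw [hc]), ⟨s, γ * g⟩, by simpa using he, ?_⟩
    rcases h with ⟨h1, h2⟩ | ⟨h1, h2⟩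
    · have h1' : γ⁻¹ * u = g := h1
      have h2' : γ⁻¹ * w = g * gen s := h2
      refine Or.inl ⟨?_, ?_⟩
      · show u = γ * g
        rw [← h1', mul_inv_cancel_left]
      · show w = γ * g * gen s
        rw [mul_assoc, ← h2', mul_inv_cancel_left]
    · have h1' : γ⁻¹ * w = g := h1
      have h2' : γ⁻¹ * u = g * gen s := h2
      refine Or.inr ⟨?_, ?_⟩
      · show w = γ * g
        rw [← h1', mul_inv_cancel_left]
      · show u = γ * g * gen s
        rw [mul_assoc, ← h2', mul_inv_cancel_left]

lemma reachShift (gen : S → Γ) (ω : S × Γ → Bool) (γ u w : Γ) :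
    (ωGraph gen (fun e => ω (e.1, γ⁻¹ * e.2))).Reachable u w ↔
      (ωGraph gen ω).Reachable (γ⁻¹ * u) (γ⁻¹ * w) := by
  rw [SimpleGraph.reachable_iff_reflTransGen, SimpleGraph.reachable_iff_reflTransGen]
  constructor
  · intro h
    exact Relation.ReflTransGen.lift (fun z => γ⁻¹ * z)
      (fun p q hpq => (adjShift gen ω γ p q).mp hpq) _ _ h
  · intro h
    have := Relation.ReflTransGen.lift (fun z => γ * z)
      (fun p q hpq => (adjShift gen ω γ (γ * p) (γ * q)).mpr (by simpa using hpq)) _ _ h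
    simpa [Function.onFun] using this

end GraphAux

section MeasAux

open Classical in
/-- The indicator function of the cluster of `v` in `ω`. -/
noncomputable def clusterFn {Γ S : Type*} [Group Γ] (gen : S → Γ) (ω : S × Γ → Bool) (v : Γ) :
    Γ → Bool :=
  fun w => decide ((ωGraph gen ω).Reachable v w)

variable {Γ S : Type*} [Group Γ]

lemma clusterFn_true_iff (gen : S → Γ) (ω : S × Γ → Bool) (v w : Γ) :
    clusterFn gen ω v w = true ↔ (ωGraph gen ω).Reachable v w := by
  simp [clusterFn]

lemma eq_clusterFn_of_spec (gen : S → Γ) {ω : S × Γ → Bool} {C : Γ → Bool} {v : Γ}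
    (h : ∀ w, C w = true ↔ (ωGraph gen ω).Reachable v w) : C = clusterFn gen ω v := by
  funext w
  rw [Bool.eq_iff_iff, h w, clusterFn_true_iff]

lemma isInfiniteCluster_clusterFn (gen : S → Γ) (ω : S × Γ → Bool) (v : Γ)
    (h : {w | clusterFn gen ω v w = true}.Infinite) :
    IsInfiniteCluster gen ω (clusterFn gen ω v) :=
  ⟨⟨v, fun w => clusterFn_true_iff gen ω v w⟩, h⟩

variable [Countable Γ] [Countable S]

lemma measurableSet_adj (gen : S → Γ) (u w : Γ) :
    MeasurableSet {ω : S × Γ → Bool | (ωGraph gen ω).Adj u w} := by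
  have : {ω : S × Γ → Bool | (ωGraph gen ω).Adj u w} =
      {ω : S × Γ → Bool | u ≠ w} ∩ ⋃ e : S × Γ, ({ω : S × Γ → Bool | ω e = true} ∩
        {ω : S × Γ → Bool | (u = e.2 ∧ w = e.2 * gen e.1) ∨ (w = e.2 ∧ u = e.2 * gen e.1)}) := by
    ext ω
    simp only [Set.mem_setOf_eq, Set.mem_inter_iff, Set.mem_iUnion]
    exact ⟨fun ⟨h1, e, h2, h3⟩ => ⟨h1, e, h2, h3⟩, fun ⟨h1, e, h2, h3⟩ => ⟨h1, e, h2, h3⟩⟩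
  rw [this]
  refine (MeasurableSet.const _).inter (MeasurableSet.iUnion fun e => ?_)
  have hev : Measurable fun ω : S × Γ → Bool => ω e := measurable_pi_apply e
  exact (hev (MeasurableSet.singleton true)).inter (MeasurableSet.const _)

lemma measurableSet_chain (gen : S → Γ) (l : List Γ) :
    ∀ u : Γ, MeasurableSet {ω : S × Γ → Bool | List.Chain (ωGraph gen ω).Adj u l} := by
  induction l with
  | nil =>
    intro u
    have : {ω : S × Γ → Bool | List.Chain (ωGraph gen ω).Adj u []} = Set.univ := by
      ext ω; simp [List.Chain]
    rw [this]; exact MeasurableSet.univ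
  | cons v l ih =>
    intro u
    have : {ω : S × Γ → Bool | List.Chain (ωGraph gen ω).Adj u (v :: l)} =
        {ω : S × Γ → Bool | (ωGraph gen ω).Adj u v} ∩
          {ω : S × Γ → Bool | List.Chain (ωGraph gen ω).Adj v l} := by
      ext ω; simp [List.Chain, List.isChain_cons_cons]
    rw [this]
    exact (measurableSet_adj gen u v).inter (ih v)

lemma measurableSet_reachable (gen : S → Γ) (u w : Γ) :
    MeasurableSet {ω : S × Γ → Bool | (ωGraph gen ω).Reachable u w} := by
  have : {ω : S × Γ → Bool | (ωGraph gen ω).Reachable u w} =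
      ⋃ l : List Γ, {ω : S × Γ → Bool | List.Chain (ωGraph gen ω).Adj u l} ∩
        {ω : S × Γ → Bool | (u :: l).getLast (List.cons_ne_nil _ _) = w} := by
    ext ω
    simp only [Set.mem_setOf_eq, Set.mem_iUnion, Set.mem_inter_iff]
    rw [SimpleGraph.reachable_iff_reflTransGen]
    constructor
    · intro h
      obtain ⟨l, h1, h2⟩ := List.exists_isChain_cons_of_relationReflTransGen h
      exact ⟨l, h1, h2⟩
    · rintro ⟨l, h1, h2⟩
      exact List.relationReflTransGen_of_exists_isChain_cons l h1 h2
  rw [this]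
  exact MeasurableSet.iUnion fun l =>
    (measurableSet_chain gen l u).inter (MeasurableSet.const _)

lemma measurable_decideProp {α : Type*} [MeasurableSpace α] (p : α → Prop)
    [DecidablePred p] (hp : MeasurableSet {x | p x}) :
    Measurable fun x => decide (p x) := by
  have : (fun x => decide (p x)) = fun x => if p x then true else false := by
    funext x; by_cases h : p x <;> simp [h]
  rw [this]
  exact Measurable.ite hp measurable_const measurable_const

lemma measurable_clusterFn {X : Type*} [MeasurableSpace X] {π : X → S × Γ → Bool}
    (hπ : Measurable π) (gen : S → Γ) (v : Γ) :
    Measurable fun x => clusterFn gen (π x) v := by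
  classical
  refine measurable_pi_lambda _ fun w => ?_
  have : (fun x => clusterFn gen (π x) v w) =
      (fun ω : S × Γ → Bool => clusterFn gen ω v w) ∘ π := rfl
  rw [this]
  refine Measurable.comp ?_ hπ
  exact measurable_decideProp _ (measurableSet_reachable gen v w)

omit [Group Γ] in
lemma measurableSet_infiniteSupport :
    MeasurableSet {C : Γ → Bool | {w | C w = true}.Infinite} := by
  classical
  have : {C : Γ → Bool | {w | C w = true}.Finite} =
      ⋃ F : Finset Γ, ⋂ w : Γ, {C : Γ → Bool | w ∈ F ∨ C w = false} := by
    ext C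
    simp only [Set.mem_setOf_eq, Set.mem_iUnion, Set.mem_iInter]
    constructor
    · intro h
      exact ⟨h.toFinset, fun w => by
        by_cases hw : C w = true
        · exact Or.inl (h.mem_toFinset.mpr hw)
        · exact Or.inr (by simpa using hw)⟩
    · rintro ⟨F, hF⟩
      refine Set.Finite.subset F.finite_toSet fun w hw => ?_
      rcases hF w with h | h
      · exact h
      · simp [Set.mem_setOf_eq.mp hw] at h
  have h2 : {C : Γ → Bool | {w | C w = true}.Infinite} =
      {C : Γ → Bool | {w | C w = true}.Finite}ᶜ := by
    ext C; exact Iff.rfl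
  rw [h2, this]
  refine MeasurableSet.compl (MeasurableSet.iUnion fun F => MeasurableSet.iInter fun w => ?_)
  by_cases hw : w ∈ F
  · have : {C : Γ → Bool | w ∈ F ∨ C w = false} = Set.univ := by
      ext C; simp [hw]
    rw [this]; exact MeasurableSet.univ
  · have : {C : Γ → Bool | w ∈ F ∨ C w = false} = (fun C : Γ → Bool => C w) ⁻¹' {false} := by
      ext C; simp [hw]
    rw [this]
    have hev : Measurable fun C : Γ → Bool => C w := measurable_pi_apply w
    exact hev (MeasurableSet.singleton false)

lemma measurableSet_iffSet {α : Type*} [MeasurableSpace α] {p q : α → Prop}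
    (hp : MeasurableSet {x | p x}) (hq : MeasurableSet {x | q x}) :
    MeasurableSet {x | p x ↔ q x} := by
  have : {x | p x ↔ q x} = ({x | p x} ∩ {x | q x}) ∪ ({x | p x}ᶜ ∩ {x | q x}ᶜ) := by
    ext x; simp only [Set.mem_union, Set.mem_inter_iff, Set.mem_compl_iff, Set.mem_setOf_eq]
    tauto
  rw [this]
  exact ((hp.inter hq).union (hp.compl.inter hq.compl))

end MeasAux

section ActionAux

variable {Γ S X : Type*} [Group Γ]

lemma measurableSet_eqFun {α X : Type*} [MeasurableSpace α] [MeasurableSpace X]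
    [StandardBorelSpace X] {f g : α → X} (hf : Measurable f) (hg : Measurable g) :
    MeasurableSet {x | f x = g x} := by
  letI := upgradeStandardBorel X
  exact MeasureTheory.StronglyMeasurable.measurableSet_eq_fun hf.stronglyMeasurable hg.stronglyMeasurable

variable (gen : S → Γ) (a : Γ → X → X) (π : X → S × Γ → Bool)

lemma reachEquiv (hπ : ∀ γ x, π (a γ x) = fun e => π x (e.1, γ⁻¹ * e.2)) (γ : Γ) (x : X)
    (u w : Γ) : (ωGraph gen (π (a γ x))).Reachable u w ↔
      (ωGraph gen (π x)).Reachable (γ⁻¹ * u) (γ⁻¹ * w) := by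
  rw [hπ γ x]
  exact reachShift gen (π x) γ u w

lemma clusterFn_equiv (hπ : ∀ γ x, π (a γ x) = fun e => π x (e.1, γ⁻¹ * e.2)) (γ : Γ) (x : X)
    (v : Γ) : clusterFn gen (π (a γ x)) v =
      fun w => clusterFn gen (π x) (γ⁻¹ * v) (γ⁻¹ * w) := by
  funext w
  show clusterFn gen (π (a γ x)) v w = clusterFn gen (π x) (γ⁻¹ * v) (γ⁻¹ * w)
  rw [Bool.eq_iff_iff, clusterFn_true_iff, clusterFn_true_iff]
  exact reachEquiv gen a π hπ γ x v w

lemma support_clusterFn_equiv (hπ : ∀ γ x, π (a γ x) = fun e => π x (e.1, γ⁻¹ * e.2))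
    (γ : Γ) (x : X) (v : Γ) :
    {w | clusterFn gen (π (a γ x)) v w = true} =
      (fun u => γ * u) '' {w | clusterFn gen (π x) (γ⁻¹ * v) w = true} := by
  ext w
  simp only [Set.mem_setOf_eq, Set.mem_image, clusterFn_equiv gen a π hπ γ x v]
  constructor
  · intro h
    exact ⟨γ⁻¹ * w, h, by simp⟩
  · rintro ⟨u, hu, rfl⟩
    simpa using hu

lemma infiniteSupport_clusterFn_equiv (hπ : ∀ γ x, π (a γ x) = fun e => π x (e.1, γ⁻¹ * e.2))
    (γ : Γ) (x : X) (v : Γ) :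
    {w | clusterFn gen (π (a γ x)) v w = true}.Infinite ↔
      {w | clusterFn gen (π x) (γ⁻¹ * v) w = true}.Infinite := by
  rw [support_clusterFn_equiv gen a π hπ γ x v]
  exact Set.infinite_image_iff (mul_right_injective γ).injOn

lemma classEq (x : X) : {y | ClusterRel gen a π x y} =
    (fun γ => a γ⁻¹ x) '' {γ | (ωGraph gen (π x)).Reachable 1 γ} := by
  ext y
  simp only [ClusterRel, Set.mem_setOf_eq, Set.mem_image]
  exact ⟨fun ⟨γ, h1, h2⟩ => ⟨γ, h2, h1⟩, fun ⟨γ, h1, h2⟩ => ⟨γ, h2, h1⟩⟩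

lemma infinite_reach_of_mem_IL {x : X} (h : x ∈ InfiniteLocus gen a π) :
    {γ | (ωGraph gen (π x)).Reachable 1 γ}.Infinite :=
  Set.Infinite.of_image _ (by rw [← classEq gen a π x]; exact h)

lemma mem_IL_of_free (ha_one : ∀ x, a 1 x = x) (ha_mul : ∀ γ δ x, a (γ * δ) x = a γ (a δ x))
    {x : X} (hfree : ∀ γ, a γ x = x → γ = 1)
    (hinf : {γ | (ωGraph gen (π x)).Reachable 1 γ}.Infinite) :
    x ∈ InfiniteLocus gen a π := by
  show Set.Infinite _
  rw [classEq gen a π x]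
  refine hinf.image ?_
  intro γ hγ δ hδ h
  have h' : a γ⁻¹ x = a δ⁻¹ x := h
  have h2 : a (δ * γ⁻¹) x = x := by
    rw [ha_mul, h', ← ha_mul, mul_inv_cancel, ha_one]
  exact (mul_inv_eq_one.mp (hfree _ h2)).symm

lemma free_shift (ha_one : ∀ x, a 1 x = x) (ha_mul : ∀ γ δ x, a (γ * δ) x = a γ (a δ x))
    {x : X} (hfree : ∀ γ, a γ x = x → γ = 1) (δ : Γ) :
    ∀ γ, a γ (a δ x) = a δ x → γ = 1 := by
  intro γ h
  have h2 : a (δ⁻¹ * (γ * δ)) x = x := by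
    rw [ha_mul, ha_mul, h, ← ha_mul, inv_mul_cancel, ha_one]
  have h3 := hfree _ h2
  have : γ * δ = δ := by
    have := congrArg (fun t => δ * t) h3
    simpa [mul_assoc] using this
  exact mul_right_cancel (by rw [this, one_mul])

lemma clusterRel_step (ha_mul : ∀ γ δ x, a (γ * δ) x = a γ (a δ x))
    (hπ : ∀ γ x, π (a γ x) = fun e => π x (e.1, γ⁻¹ * e.2))
    {x : X} {γ : Γ} (hγ : (ωGraph gen (π x)).Reachable 1 γ) :
    ∀ z, ClusterRel gen a π x z → ClusterRel gen a π (a γ⁻¹ x) z := by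
  rintro z ⟨δ, rfl, hδ⟩
  refine ⟨γ⁻¹ * δ, ?_, ?_⟩
  · rw [← ha_mul]
    congr 1
    group
  · rw [reachEquiv gen a π hπ γ⁻¹ x]
    simpa using hγ.symm.trans hδ

lemma clusterRel_symm (ha_one : ∀ x, a 1 x = x)
    (ha_mul : ∀ γ δ x, a (γ * δ) x = a γ (a δ x))
    (hπ : ∀ γ x, π (a γ x) = fun e => π x (e.1, γ⁻¹ * e.2))
    {x y : X} (h : ClusterRel gen a π x y) : ClusterRel gen a π y x := by
  obtain ⟨γ, rfl, hγ⟩ := h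
  refine ⟨γ⁻¹, ?_, ?_⟩
  · rw [← ha_mul]; simp [ha_one]
  · rw [reachEquiv gen a π hπ γ⁻¹ x]
    simpa using hγ.symm

end ActionAux

section ILAux

variable {Γ S X : Type*} [Group Γ] [Countable Γ] [Countable S]
  [MeasurableSpace X] [StandardBorelSpace X]

lemma measurableSet_infiniteLocus (gen : S → Γ) (a : Γ → X → X) (π : X → S × Γ → Bool)
    (ha_meas : ∀ γ, Measurable (a γ)) (hπ_meas : Measurable π) :
    MeasurableSet (InfiniteLocus gen a π) := by
  classical
  have key : InfiniteLocus gen a π = ⋂ n : ℕ, ⋃ t : Finset Γ,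
      ({x : X | n ≤ t.card} ∩ (⋂ γ ∈ t, {x : X | (ωGraph gen (π x)).Reachable 1 γ}) ∩
        ⋂ γ ∈ t, ⋂ δ ∈ t, {x : X | γ ≠ δ → a γ⁻¹ x ≠ a δ⁻¹ x}) := by
    ext x
    simp only [Set.mem_iInter, Set.mem_iUnion, Set.mem_inter_iff, Set.mem_setOf_eq]
    constructor
    · intro hx n
      have hinf : {y | ClusterRel gen a π x y}.Infinite := hx
      obtain ⟨t, hts, htc⟩ := hinf.exists_subset_card_eq n
      choose f hf1 hf2 using fun (y : t) => hts y.2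
      refine ⟨t.attach.image f, ⟨?_, ?_⟩, ?_⟩
      · have hinj : Set.InjOn f t.attach := by
          intro y _ z _ h
          have : (y : X) = (z : X) := by rw [← hf1 y, ← hf1 z, h]
          exact Subtype.ext this
        rw [Finset.card_image_of_injOn hinj, Finset.card_attach, htc]
      · intro γ hγ
        obtain ⟨y, _, rfl⟩ := Finset.mem_image.mp hγ
        exact hf2 y
      · intro γ hγ δ hδ hne heq
        obtain ⟨y, _, rfl⟩ := Finset.mem_image.mp hγ
        obtain ⟨z, _, rfl⟩ := Finset.mem_image.mp hδ
        apply hne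
        congr 1
        apply Subtype.ext
        show (y : X) = (z : X)
        rw [← hf1 y, ← hf1 z]
        exact heq
    · intro h
      show Set.Infinite _
      by_contra hfin
      rw [Set.not_infinite] at hfin
      obtain ⟨t, ⟨htc, ht2⟩, ht3⟩ := h (hfin.toFinset.card + 1)
      have hsub : t.image (fun γ => a γ⁻¹ x) ⊆ hfin.toFinset := by
        intro y hy
        obtain ⟨γ, hγ, rfl⟩ := Finset.mem_image.mp hy
        exact hfin.mem_toFinset.mpr ⟨γ, rfl, ht2 γ hγ⟩
      have hinj : Set.InjOn (fun γ => a γ⁻¹ x) t := by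
        intro γ hγ δ hδ hh
        by_contra hne
        exact ht3 γ hγ δ hδ hne hh
      have := Finset.card_le_card hsub
      rw [Finset.card_image_of_injOn hinj] at this
      omega
  rw [key]
  refine MeasurableSet.iInter fun n => MeasurableSet.iUnion fun t => ?_
  refine ((MeasurableSet.const _).inter ?_).inter ?_
  · refine MeasurableSet.biInter t.countable_toSet fun γ _ => ?_
    exact hπ_meas (measurableSet_reachable gen 1 γ)
  · refine MeasurableSet.biInter t.countable_toSet fun γ _ => ?_
    refine MeasurableSet.biInter t.countable_toSet fun δ _ => ?_
    by_cases hgd : γ = δ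
    · have : {x : X | γ ≠ δ → a γ⁻¹ x ≠ a δ⁻¹ x} = Set.univ := by
        ext x; simp [hgd]
      rw [this]; exact MeasurableSet.univ
    · have : {x : X | γ ≠ δ → a γ⁻¹ x ≠ a δ⁻¹ x} = {x : X | a γ⁻¹ x = a δ⁻¹ x}ᶜ := by
        ext x; simp [hgd]
      rw [this]
      exact (measurableSet_eqFun (ha_meas γ⁻¹) (ha_meas δ⁻¹)).compl

end ILAux

lemma mem_inv_iff {Γ X : Type*} [Group Γ] (a : Γ → X → X)
    (ha_one : ∀ x, a 1 x = x) (ha_mul : ∀ γ δ x, a (γ * δ) x = a γ (a δ x))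
    {A : Set (X × (Γ → Bool))}
    (hA : ∀ γ : Γ, ∀ p ∈ A, (a γ p.1, fun v : Γ => p.2 (γ⁻¹ * v)) ∈ A)
    (γ : Γ) (x : X) (C : Γ → Bool) :
    (x, C) ∈ A ↔ (a γ x, fun v => C (γ⁻¹ * v)) ∈ A := by
  constructor
  · intro h; exact hA γ (x, C) h
  · intro h
    have h2 := hA γ⁻¹ (a γ x, fun v => C (γ⁻¹ * v)) h
    have e1 : a γ⁻¹ (a γ x) = x := by rw [← ha_mul, inv_mul_cancel, ha_one]
    simp only [e1] at h2
    convert h2 using 2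
    funext v
    simp
/-- **Ergodicity of the cluster relation on its infinite locus is equivalent to
indistinguishability of infinite clusters.**  Let `Γ` act on `(X, ν)` by a
measure-preserving, essentially free, ergodic action and let `π` be a
`Γ`-equivariant Borel map with `ν(U^∞) ≠ 0`.  Then `R^cl` restricted to `U^∞`
is ergodic iff `(ν, π)` has indistinguishable infinite clusters. -/

theorem clusterRel_ergodic_iff_indistinguishable
    {Γ S X : Type*} [Group Γ] [Countable Γ] [Fintype S]
    [MeasurableSpace X] [StandardBorelSpace X]
    (gen : S → Γ) (hgen : Subgroup.closure (Set.range gen) = ⊤)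
    (ν : Measure X) [IsProbabilityMeasure ν]
    (a : Γ → X → X)
    (ha_one : ∀ x, a 1 x = x)
    (ha_mul : ∀ γ δ x, a (γ * δ) x = a γ (a δ x))
    (ha_mp : ∀ γ, MeasurePreserving (a γ) ν ν)
    (ha_free : ∀ᵐ x ∂ν, ∀ γ : Γ, a γ x = x → γ = 1)
    (ha_erg : ∀ A : Set X, MeasurableSet A → (∀ γ, a γ ⁻¹' A = A) →
      ν A = 0 ∨ ν Aᶜ = 0)
    (π : X → S × Γ → Bool) (hπ_meas : Measurable π)
    (hπ_equiv : ∀ γ x, π (a γ x) = fun e => π x (e.1, γ⁻¹ * e.2))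
    (hU : ν (InfiniteLocus gen a π) ≠ 0) :
    -- ergodicity of `R^cl` restricted to `U^∞` ...
    (∀ A : Set X, MeasurableSet A → A ⊆ InfiniteLocus gen a π →
        (∀ x ∈ A, ∀ y, ClusterRel gen a π x y → y ∈ A) →
        ν A = 0 ∨ ν (InfiniteLocus gen a π \ A) = 0)
    -- ... iff indistinguishability of infinite clusters
    ↔ HasIndistinguishableInfiniteClusters gen a ν π := by
  classical
  have ha_meas : ∀ γ, Measurable (a γ) := fun γ => (ha_mp γ).measurable
  have hKmeas : ∀ v : Γ, Measurable fun x => clusterFn gen (π x) v :=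
    fun v => measurable_clusterFn hπ_meas gen v
  have hIL_meas : MeasurableSet (InfiniteLocus gen a π) :=
    measurableSet_infiniteLocus gen a π ha_meas hπ_meas
  -- support of the cluster of the base point
  have hsupp1 : ∀ x : X, {w : Γ | clusterFn gen (π x) 1 w = true} =
      {γ : Γ | (ωGraph gen (π x)).Reachable 1 γ} := by
    intro x; ext w; simp [clusterFn_true_iff]
  constructor
  · -- ergodicity implies indistinguishability
    intro herg A hA_meas hA_inf hA_inv
    have hkeyA := mem_inv_iff a ha_one ha_mul hA_inv
    set B : Set X := InfiniteLocus gen a π ∩ {x | (x, clusterFn gen (π x) 1) ∈ A} with hBdef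
    have hB_meas : MeasurableSet B :=
      hIL_meas.inter ((measurable_id.prodMk (hKmeas 1)) hA_meas)
    have hB_sub : B ⊆ InfiniteLocus gen a π := Set.inter_subset_left
    have hB_sat : ∀ x ∈ B, ∀ y, ClusterRel gen a π x y → y ∈ B := by
      rintro x ⟨hxIL, hxA⟩ y hrel
      obtain ⟨γ, rfl, hγ⟩ := hrel
      constructor
      · show Set.Infinite _
        exact Set.Infinite.mono
          (fun z hz => clusterRel_step gen a π ha_mul hπ_equiv hγ z hz) hxIL
      · show (a γ⁻¹ x, clusterFn gen (π (a γ⁻¹ x)) 1) ∈ A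
        have e : clusterFn gen (π (a γ⁻¹ x)) 1 =
            fun w => clusterFn gen (π x) 1 (γ⁻¹⁻¹ * w) := by
          rw [clusterFn_equiv gen a π hπ_equiv γ⁻¹ x 1]
          funext w
          show clusterFn gen (π x) (γ⁻¹⁻¹ * 1) (γ⁻¹⁻¹ * w) = clusterFn gen (π x) 1 (γ⁻¹⁻¹ * w)
          rw [mul_one, Bool.eq_iff_iff, clusterFn_true_iff, clusterFn_true_iff, inv_inv]
          exact ⟨fun h => hγ.trans h, fun h => hγ.symm.trans h⟩
        rw [e]
        exact hA_inv γ⁻¹ (x, clusterFn gen (π x) 1) hxA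
    -- the null set of non-free points
    have hN : ν {x : X | ¬ ∀ γ : Γ, a γ x = x → γ = 1} = 0 := ae_iff.mp ha_free
    rcases herg B hB_meas hB_sub hB_sat with hB0 | hBd0
    · -- the base cluster is a.e. not in A: then no cluster is in A, a.e.
      have hpre : ∀ v : Γ, ν ((fun x => a v⁻¹ x) ⁻¹' B) = 0 := by
        intro v
        have hh : (fun x => a v⁻¹ x) ⁻¹' B = a v⁻¹ ⁻¹' B := rfl
        rw [hh, (ha_mp v⁻¹).measure_preimage hB_meas.nullMeasurableSet]
        exact hB0
      refine measure_mono_null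
        (t := {x : X | ¬ ∀ γ : Γ, a γ x = x → γ = 1} ∪
          ⋃ v : Γ, (fun x => a v⁻¹ x) ⁻¹' B) ?_
        (measure_union_null hN (measure_iUnion_null hpre))
      intro x hx
      by_cases hfx : ∀ γ : Γ, a γ x = x → γ = 1
      · refine Or.inr ?_
        obtain ⟨C, hC⟩ := hx.1
        obtain ⟨⟨v, hv⟩, hCinf⟩ := hA_inf (x, C) hC
        have hCeq : C = clusterFn gen (π x) v := eq_clusterFn_of_spec gen hv
        refine Set.mem_iUnion.mpr ⟨v, ?_⟩
        show a v⁻¹ x ∈ B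
        have e : clusterFn gen (π (a v⁻¹ x)) 1 = fun w => C (v⁻¹⁻¹ * w) := by
          rw [clusterFn_equiv gen a π hπ_equiv v⁻¹ x 1, hCeq]
          funext w
          show clusterFn gen (π x) (v⁻¹⁻¹ * 1) (v⁻¹⁻¹ * w) =
            clusterFn gen (π x) v (v⁻¹⁻¹ * w)
          rw [mul_one, inv_inv]
        have hmemA : (a v⁻¹ x, clusterFn gen (π (a v⁻¹ x)) 1) ∈ A := by
          rw [e]
          exact hA_inv v⁻¹ (x, C) hC
        refine ⟨?_, hmemA⟩
        refine mem_IL_of_free gen a π ha_one ha_mul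
          (free_shift a ha_one ha_mul hfx v⁻¹) ?_
        rw [← hsupp1 (a v⁻¹ x)]
        exact (hA_inf _ hmemA).2
      · exact Or.inl hfx
    · -- a.e. point of the infinite locus has its base cluster in A
      have hpre : ∀ v : Γ, ν ((fun x => a v⁻¹ x) ⁻¹' (InfiniteLocus gen a π \ B)) = 0 := by
        intro v
        have hh : (fun x => a v⁻¹ x) ⁻¹' (InfiniteLocus gen a π \ B) =
            a v⁻¹ ⁻¹' (InfiniteLocus gen a π \ B) := rfl
        rw [hh, (ha_mp v⁻¹).measure_preimage (hIL_meas.diff hB_meas).nullMeasurableSet]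
        exact hBd0
      refine measure_mono_null
        (t := {x : X | ¬ ∀ γ : Γ, a γ x = x → γ = 1} ∪
          ⋃ v : Γ, (fun x => a v⁻¹ x) ⁻¹' (InfiniteLocus gen a π \ B)) ?_
        (measure_union_null hN (measure_iUnion_null hpre))
      intro x hx
      by_cases hfx : ∀ γ : Γ, a γ x = x → γ = 1
      · refine Or.inr ?_
        obtain ⟨C, hCcl, hCnotA⟩ := hx.2
        obtain ⟨⟨v, hv⟩, hCinf⟩ := hCcl
        have hCeq : C = clusterFn gen (π x) v := eq_clusterFn_of_spec gen hv
        refine Set.mem_iUnion.mpr ⟨v, ?_⟩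
        show a v⁻¹ x ∈ InfiniteLocus gen a π \ B
        have e : clusterFn gen (π (a v⁻¹ x)) 1 = fun w => C (v⁻¹⁻¹ * w) := by
          rw [clusterFn_equiv gen a π hπ_equiv v⁻¹ x 1, hCeq]
          funext w
          show clusterFn gen (π x) (v⁻¹⁻¹ * 1) (v⁻¹⁻¹ * w) =
            clusterFn gen (π x) v (v⁻¹⁻¹ * w)
          rw [mul_one, inv_inv]
        have hyIL : a v⁻¹ x ∈ InfiniteLocus gen a π := by
          refine mem_IL_of_free gen a π ha_one ha_mul
            (free_shift a ha_one ha_mul hfx v⁻¹) ?_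
          rw [← hsupp1 (a v⁻¹ x),
            infiniteSupport_clusterFn_equiv gen a π hπ_equiv v⁻¹ x 1,
            mul_one, inv_inv, ← hCeq]
          exact hCinf
        refine ⟨hyIL, ?_⟩
        rintro ⟨-, hyA⟩
        have hyA' : (a v⁻¹ x, fun w => C (v⁻¹⁻¹ * w)) ∈ A := by
          rw [← e]; exact hyA
        exact hCnotA ((hkeyA v⁻¹ x C).mpr hyA')
      · exact Or.inl hfx
  · -- indistinguishability implies ergodicity
    intro hind B hB_meas hB_sub hB_sat
    set A : Set (X × (Γ → Bool)) :=
      {p | IsInfiniteCluster gen (π p.1) p.2 ∧ ∃ v : Γ, p.2 v = true ∧ a v⁻¹ p.1 ∈ B}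
      with hAdef
    have hA_meas : MeasurableSet A := by
      have hrepr : A = ((⋃ v : Γ, ⋂ w : Γ,
          {p : X × (Γ → Bool) | p.2 w = true ↔ (ωGraph gen (π p.1)).Reachable v w}) ∩
          {p : X × (Γ → Bool) | {w | p.2 w = true}.Infinite}) ∩
          ⋃ v : Γ, ({p : X × (Γ → Bool) | p.2 v = true} ∩
            {p : X × (Γ → Bool) | a v⁻¹ p.1 ∈ B}) := by
        ext p
        simp only [hAdef, IsInfiniteCluster, Set.mem_setOf_eq, Set.mem_inter_iff,
          Set.mem_iUnion, Set.mem_iInter]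
      rw [hrepr]
      have hev : ∀ w : Γ, Measurable fun p : X × (Γ → Bool) => p.2 w :=
        fun w => (measurable_pi_apply w).comp measurable_snd
      refine MeasurableSet.inter (MeasurableSet.inter ?_ ?_) ?_
      · refine MeasurableSet.iUnion fun v => MeasurableSet.iInter fun w => ?_
        exact measurableSet_iffSet (hev w (MeasurableSet.singleton true))
          ((hπ_meas.comp measurable_fst) (measurableSet_reachable gen v w))
      · exact measurable_snd measurableSet_infiniteSupport
      · refine MeasurableSet.iUnion fun v => MeasurableSet.inter ?_ ?_
        · exact hev v (MeasurableSet.singleton true)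
        · exact ((ha_meas v⁻¹).comp measurable_fst) hB_meas
    have hA_inf : ∀ p ∈ A, IsInfiniteCluster gen (π p.1) p.2 := fun p hp => hp.1
    have hA_inv : ∀ γ : Γ, ∀ p ∈ A, (a γ p.1, fun v : Γ => p.2 (γ⁻¹ * v)) ∈ A := by
      rintro γ ⟨x, C⟩ ⟨⟨⟨v₀, hv₀⟩, hCinf⟩, v, hCv, hvB⟩
      refine ⟨⟨⟨γ * v₀, ?_⟩, ?_⟩, γ * v, ?_, ?_⟩
      · intro w
        show C (γ⁻¹ * w) = true ↔ _
        rw [reachEquiv gen a π hπ_equiv γ x (γ * v₀) w, inv_mul_cancel_left]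
        exact hv₀ (γ⁻¹ * w)
      · show Set.Infinite {w : Γ | C (γ⁻¹ * w) = true}
        have himg : {w : Γ | C (γ⁻¹ * w) = true} = (fun u => γ * u) '' {w | C w = true} := by
          ext w
          simp only [Set.mem_setOf_eq, Set.mem_image]
          constructor
          · intro h; exact ⟨γ⁻¹ * w, h, by simp⟩
          · rintro ⟨u, hu, rfl⟩; simpa using hu
        rw [himg]
        exact hCinf.image (mul_right_injective γ).injOn
      · show C (γ⁻¹ * (γ * v)) = true
        rw [inv_mul_cancel_left]; exact hCv
      · show a (γ * v)⁻¹ (a γ x) ∈ B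
        rw [← ha_mul]
        have : (γ * v)⁻¹ * γ = v⁻¹ := by group
        rw [this]; exact hvB
    have hkey := mem_inv_iff a ha_one ha_mul hA_inv
    have hnull := hind A hA_meas hA_inf hA_inv
    -- the sets E and F
    set E : Set X := {x | ∃ v : Γ, (x, clusterFn gen (π x) v) ∈ A} with hEdef
    set F : Set X := {x | ∃ v : Γ, {w | clusterFn gen (π x) v w = true}.Infinite ∧
      (x, clusterFn gen (π x) v) ∉ A} with hFdef
    have hEF_null : ν (E ∩ F) = 0 := by
      refine measure_mono_null ?_ hnull
      rintro x ⟨⟨v, hv⟩, u, hu1, hu2⟩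
      exact ⟨⟨_, hv⟩, ⟨clusterFn gen (π x) u,
        isInfiniteCluster_clusterFn gen (π x) u hu1, hu2⟩⟩
    have hE_meas : MeasurableSet E := by
      have : E = ⋃ v : Γ, (fun x => (x, clusterFn gen (π x) v)) ⁻¹' A := by
        ext x; simp [hEdef]
      rw [this]
      exact MeasurableSet.iUnion fun v => (measurable_id.prodMk (hKmeas v)) hA_meas
    have hF_meas : MeasurableSet F := by
      have : F = ⋃ v : Γ, ((fun x => clusterFn gen (π x) v) ⁻¹'
          {C : Γ → Bool | {w | C w = true}.Infinite} ∩
          ((fun x => (x, clusterFn gen (π x) v)) ⁻¹' A)ᶜ) := by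
        ext x; simp [hFdef]
      rw [this]
      refine MeasurableSet.iUnion fun v => MeasurableSet.inter ?_ ?_
      · exact (hKmeas v) measurableSet_infiniteSupport
      · exact ((measurable_id.prodMk (hKmeas v)) hA_meas).compl
    -- key transport fact
    have htrans : ∀ (γ : Γ) (x : X) (v : Γ),
        (a γ x, clusterFn gen (π (a γ x)) v) ∈ A ↔
          (x, clusterFn gen (π x) (γ⁻¹ * v)) ∈ A := by
      intro γ x v
      rw [clusterFn_equiv gen a π hπ_equiv γ x v]
      exact (hkey γ x (clusterFn gen (π x) (γ⁻¹ * v))).symm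
    have hE_inv : ∀ γ : Γ, a γ ⁻¹' E = E := by
      intro γ
      ext x
      simp only [Set.mem_preimage, hEdef, Set.mem_setOf_eq]
      constructor
      · rintro ⟨v, hv⟩
        exact ⟨γ⁻¹ * v, (htrans γ x v).mp hv⟩
      · rintro ⟨v, hv⟩
        refine ⟨γ * v, ?_⟩
        rw [htrans γ x (γ * v), inv_mul_cancel_left]
        exact hv
    have hF_inv : ∀ γ : Γ, a γ ⁻¹' F = F := by
      intro γ
      ext x
      simp only [Set.mem_preimage, hFdef, Set.mem_setOf_eq]
      constructor
      · rintro ⟨v, hv1, hv2⟩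
        refine ⟨γ⁻¹ * v, ?_, ?_⟩
        · rw [← infiniteSupport_clusterFn_equiv gen a π hπ_equiv γ x v]
          exact hv1
        · intro hc
          exact hv2 ((htrans γ x v).mpr hc)
      · rintro ⟨v, hv1, hv2⟩
        refine ⟨γ * v, ?_, ?_⟩
        · rw [infiniteSupport_clusterFn_equiv gen a π hπ_equiv γ x (γ * v),
            inv_mul_cancel_left]
          exact hv1
        · intro hc
          rw [htrans γ x (γ * v), inv_mul_cancel_left] at hc
          exact hv2 hc
    -- B ⊆ E and U∞ \ B ⊆ F
    have hBE : B ⊆ E := by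
      intro x hx
      have hxIL := hB_sub hx
      have hinf : {w : Γ | clusterFn gen (π x) 1 w = true}.Infinite := by
        rw [hsupp1 x]
        exact infinite_reach_of_mem_IL gen a π hxIL
      refine ⟨1, ⟨⟨1, fun w => clusterFn_true_iff gen (π x) 1 w⟩, hinf⟩, 1, ?_, ?_⟩
      · exact (clusterFn_true_iff gen (π x) 1 1).mpr ⟨SimpleGraph.Walk.nil⟩
      · rw [inv_one, ha_one]; exact hx
    have hUBF : InfiniteLocus gen a π \ B ⊆ F := by
      rintro x ⟨hxIL, hxB⟩
      have hinf : {w : Γ | clusterFn gen (π x) 1 w = true}.Infinite := by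
        rw [hsupp1 x]
        exact infinite_reach_of_mem_IL gen a π hxIL
      refine ⟨1, hinf, ?_⟩
      rintro ⟨-, v, hv1, hv2⟩
      have hreach : (ωGraph gen (π x)).Reachable 1 v :=
        (clusterFn_true_iff gen (π x) 1 v).mp hv1
      have hrel : ClusterRel gen a π x (a v⁻¹ x) := ⟨v, rfl, hreach⟩
      exact hxB (hB_sat _ hv2 x
        (clusterRel_symm gen a π ha_one ha_mul hπ_equiv hrel))
    rcases ha_erg E hE_meas hE_inv with hE0 | hEc0
    · left; exact measure_mono_null hBE hE0
    · rcases ha_erg F hF_meas hF_inv with hF0 | hFc0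
      · right; exact measure_mono_null hUBF hF0
      · exfalso
        have hcover : (Set.univ : Set X) ⊆ (E ∩ F) ∪ (Eᶜ ∪ Fᶜ) := by
          intro x _
          by_cases hE : x ∈ E <;> by_cases hF : x ∈ F <;> simp [hE, hF]
        have h0 : ν ((E ∩ F) ∪ (Eᶜ ∪ Fᶜ)) = 0 :=
          measure_union_null hEF_null (measure_union_null hEc0 hFc0)
        have h1 : ν (Set.univ : Set X) = 0 :=
          le_antisymm (h0 ▸ measure_mono hcover) zero_le
        simp [measure_univ] at h1
end

section
/- Let G be a simple graph that is connected and has no cutvertex, in which every vertex has finite degree and such that for each pair of vertices (a, b) there are only finitely many distinct simple paths joining a to b. Then G is finite. -/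
/-- A vertex `a` of a graph is a cutvertex if there are two vertices `b, c`,
both distinct from `a` and in the same connected component as `a`, such that
every (simple) path joining `b` to `c` passes through `a`. -/
def IsCutvertex {V : Type*} (G : SimpleGraph V) (a : V) : Prop :=
  ∃ b c : V, b ≠ a ∧ c ≠ a ∧ G.Reachable a b ∧ G.Reachable a c ∧
    ∀ p : G.Walk b c, p.IsPath → a ∈ p.support

section Helpers
open SimpleGraph
variable {V : Type*} {G : SimpleGraph V}


lemma myBoundary {S : Set V} : ∀ {x y : V} (q : G.Walk x y), x ∉ S → y ∈ S →
    ∃ u v : V, G.Adj u v ∧ u ∈ S ∧ v ∉ S := by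
  intro x y q
  induction q with
  | nil => intro hx hy; exact absurd hy hx
  | @cons x m y h q ih =>
    intro hx hy
    by_cases hm : m ∈ S
    · exact ⟨m, x, h.symm, hm, hx⟩
    · exact ih hm hy

lemma myFirstHit {P : Set V} : ∀ {x y : V} (q : G.Walk x y), q.IsPath → y ∈ P →
    ∃ (w : V) (q1 : G.Walk x w), w ∈ P ∧ q1.IsPath ∧ q1.support ⊆ q.support ∧
      ∀ z ∈ q1.support, z ∈ P → z = w := by
  intro x y q
  induction q with
  | nil =>
    intro _ hy
    refine ⟨_, Walk.nil, hy, Walk.IsPath.nil, fun z hz => hz, ?_⟩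
    intro z hz _
    simpa using hz
  | @cons x m y h q ih =>
    intro hq hy
    by_cases hx : x ∈ P
    · refine ⟨x, Walk.nil, hx, Walk.IsPath.nil, ?_, ?_⟩
      · intro z hz; simp at hz; subst hz; exact Walk.start_mem_support _
      · intro z hz _; simpa using hz
    · obtain ⟨w, q1, hwP, hq1, hsub, hhit⟩ := ih hq.of_cons hy
      refine ⟨w, Walk.cons h q1, hwP, ?_, ?_, ?_⟩
      · rw [Walk.cons_isPath_iff]
        exact ⟨hq1, fun hxm => ((Walk.cons_isPath_iff h q).mp hq).2 (hsub hxm)⟩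
      · intro z hz
        rw [Walk.support_cons, List.mem_cons] at hz
        rw [Walk.support_cons, List.mem_cons]
        rcases hz with rfl | hz
        · exact Or.inl rfl
        · exact Or.inr (hsub hz)
      · intro z hz hzP
        rw [Walk.support_cons, List.mem_cons] at hz
        rcases hz with rfl | hz
        · exact absurd hzP hx
        · exact hhit z hz hzP

lemma myTakeDrop [DecidableEq V] {x y w : V} {p : G.Walk x y} (hp : p.IsPath) (hw : w ∈ p.support)
    {z : V} (h1 : z ∈ (p.takeUntil w hw).support) (h2 : z ∈ (p.dropUntil w hw).support) :
    z = w := by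
  have hnd : p.support.Nodup := hp.support_nodup
  have hs : p.support = (p.takeUntil w hw).support ++ (p.dropUntil w hw).support.tail := by
    conv_lhs => rw [← Walk.take_spec p hw]
    rw [Walk.support_append]
  rw [hs, List.nodup_append] at hnd
  rw [Walk.support_eq_cons, List.mem_cons] at h2
  rcases h2 with rfl | h2
  · rfl
  · exact absurd rfl (hnd.2.2 z h1 z h2)

lemma myGlue {s u v w t : V} (X : G.Walk s u) (h : G.Adj u v)
    (Y : G.Walk v w) (Z : G.Walk w t) (hX : X.IsPath) (hY : Y.IsPath) (hZ : Z.IsPath)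
    (hXY : ∀ z ∈ X.support, z ∉ Y.support)
    (hXZ : ∀ z ∈ X.support, z ∉ Z.support.tail)
    (hYZ : ∀ z ∈ Y.support, z ∉ Z.support.tail) :
    (X.append (Walk.cons h (Y.append Z))).IsPath := by
  rw [Walk.isPath_def, Walk.support_append, Walk.support_cons, List.tail_cons,
    Walk.support_append, List.nodup_append]
  refine ⟨hX.support_nodup, ?_, ?_⟩
  · rw [List.nodup_append]
    refine ⟨hY.support_nodup, ?_, fun a ha b hb hab => hYZ a ha (by subst hab; exact hb)⟩
    exact hZ.support_nodup.sublist (List.tail_sublist _)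
  · intro z hz _ hz' rfl
    rw [List.mem_append] at hz'
    rcases hz' with h' | h'
    · exact hXY z hz h'
    · exact hXZ z hz h'

lemma myStartNotTail {w t : V} {p : G.Walk w t} (hp : p.IsPath) : w ∉ p.support.tail := by
  have h := hp.support_nodup
  rw [Walk.support_eq_cons] at h
  exact (List.nodup_cons.mp h).1

end Helpers

open SimpleGraph

/-- **Blocks with finitely many paths between any two vertices are finite.**
A connected simple graph without cutvertices, in which every vertex has finite
degree and any two vertices are joined by only finitely many distinct simple
paths, is finite. -/
theorem finite_of_no_cutvertex_finitely_many_paths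
    {V : Type*} (G : SimpleGraph V)
    (hconn : G.Connected)
    (hcut : ∀ a : V, ¬ IsCutvertex G a)
    (hdeg : ∀ v : V, (G.neighborSet v).Finite)
    (hpaths : ∀ a b : V, {p : G.Walk a b | p.IsPath}.Finite) :
    Finite V := by
  classical
  by_contra hfin
  rw [not_finite_iff_infinite] at hfin
  obtain ⟨a, b, hab⟩ := exists_pair_ne V
  set S : Set V := {v | ∃ p : G.Walk a b, p.IsPath ∧ v ∈ p.support} with hSdef
  have hSfin : S.Finite := by
    apply Set.Finite.subset ((hpaths a b).biUnion
      (fun p _ => (p.support.finite_toSet : {v | v ∈ p.support}.Finite)))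
    rintro v ⟨p, hp, hv⟩
    exact Set.mem_biUnion hp hv
  have haS : a ∈ S := by
    obtain ⟨pab⟩ := hconn.preconnected a b
    exact ⟨pab.toPath.1, pab.toPath.2, Walk.start_mem_support _⟩
  have hall : ∀ v : V, v ∈ S := by
    intro v0
    by_contra hv0
    obtain ⟨q0⟩ := hconn.preconnected v0 a
    obtain ⟨u, v, huv, huS, hvS⟩ := myBoundary q0 hv0 haS
    obtain ⟨P, hP, huP⟩ := huS
    obtain ⟨t, htu, htP⟩ : ∃ t, t ≠ u ∧ t ∈ P.support := by
      by_cases hua : u = a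
      · exact ⟨b, by rw [hua]; exact hab.symm, Walk.end_mem_support _⟩
      · exact ⟨a, fun h => hua h.symm, Walk.start_mem_support _⟩
    have hvu : v ≠ u := fun h => hvS (h ▸ ⟨P, hP, huP⟩)
    have hcu := hcut u
    rw [IsCutvertex] at hcu
    push_neg at hcu
    obtain ⟨R, hR, huR⟩ := hcu v t hvu htu (hconn.preconnected u v) (hconn.preconnected u t)
    obtain ⟨w, q1, hwP, hq1, hq1sub, hhit⟩ :=
      myFirstHit (P := {z | z ∈ P.support}) R hR htP
    have huq1 : u ∉ q1.support := fun h => huR (hq1sub h)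
    have hwu : w ≠ u := fun h => huq1 (h ▸ Walk.end_mem_support q1)
    have hvP : v ∉ P.support := fun h => hvS ⟨P, hP, h⟩
    set P1 := P.takeUntil u huP with hP1def
    set P2 := P.dropUntil u huP with hP2def
    have hP1 : P1.IsPath := hP.takeUntil huP
    have hP2 : P2.IsPath := hP.dropUntil huP
    have hw' : w ∈ (P1.append P2).support := by rw [Walk.take_spec]; exact hwP
    rcases (Walk.mem_support_append_iff _ _).mp hw' with hw1 | hw2
    · -- w on the a..u part
      set A := P1.takeUntil w hw1 with hAdef
      set Q := P2.reverse.append (Walk.cons huv (q1.append A.reverse)) with hQdef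
      have hQ : Q.IsPath := by
        refine myGlue _ huv _ _ hP2.reverse hq1 (hP1.takeUntil hw1).reverse ?_ ?_ ?_
        · intro z hz hz'
          rw [Walk.support_reverse, List.mem_reverse] at hz
          have hzw : z = w := hhit z hz' (Walk.support_dropUntil_subset P huP hz)
          subst hzw
          exact hwu (myTakeDrop hP huP hw1 hz)
        · intro z hz hz'
          rw [Walk.support_reverse, List.mem_reverse] at hz
          have hzA : z ∈ A.support := by
            have := List.mem_of_mem_tail hz'
            rwa [Walk.support_reverse, List.mem_reverse] at this
          have hz1 : z ∈ P1.support := Walk.support_takeUntil_subset P1 hw1 hzA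
          have hzu : z = u := myTakeDrop hP huP hz1 hz
          subst hzu
          exact hwu (myTakeDrop hP1 hw1 hzA (Walk.end_mem_support _)).symm
        · intro z hz hz'
          have hzP : z ∈ P.support := Walk.support_takeUntil_subset P huP
            (Walk.support_takeUntil_subset P1 hw1 (by
              have := List.mem_of_mem_tail hz'
              rwa [Walk.support_reverse, List.mem_reverse] at this))
          have hzw : z = w := hhit z hz hzP
          subst hzw
          exact myStartNotTail (hP1.takeUntil hw1).reverse hz'
      have hvQ : v ∈ Q.support := by
        rw [hQdef, Walk.mem_support_append_iff]
        right
        rw [Walk.support_cons]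
        exact List.mem_cons_of_mem _ (Walk.start_mem_support _)
      refine hvS ⟨Q.reverse, hQ.reverse, ?_⟩
      rw [Walk.support_reverse, List.mem_reverse]
      exact hvQ
    · -- w on the u..b part
      have hw2' : w ∈ P2.support := hw2
      set D := P2.dropUntil w hw2' with hDdef
      set Q := P1.append (Walk.cons huv (q1.append D)) with hQdef
      have hQ : Q.IsPath := by
        refine myGlue _ huv _ _ hP1 hq1 (hP2.dropUntil hw2') ?_ ?_ ?_
        · intro z hz hz'
          have hzw : z = w := hhit z hz' (Walk.support_takeUntil_subset P huP hz)
          subst hzw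
          exact hwu (myTakeDrop hP huP hz hw2')
        · intro z hz hz'
          have hzD : z ∈ P2.support :=
            Walk.support_dropUntil_subset P2 hw2' (List.mem_of_mem_tail hz')
          have hzu : z = u := myTakeDrop hP huP hz hzD
          subst hzu
          exact hwu (myTakeDrop hP2 hw2' (Walk.start_mem_support _)
            (List.mem_of_mem_tail hz')).symm
        · intro z hz hz'
          have hzP : z ∈ P.support := Walk.support_dropUntil_subset P huP
            (Walk.support_dropUntil_subset P2 hw2' (List.mem_of_mem_tail hz'))
          have hzw : z = w := hhit z hz hzP
          subst hzw
          exact myStartNotTail (hP2.dropUntil hw2') hz'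
      have hvQ : v ∈ Q.support := by
        rw [hQdef, Walk.mem_support_append_iff]
        right
        rw [Walk.support_cons]
        exact List.mem_cons_of_mem _ (Walk.start_mem_support _)
      exact hvS ⟨Q, hQ, hvQ⟩
  have huniv : (Set.univ : Set V).Finite := hSfin.subset fun v _ => hall v
  exact hfin.not_finite (Set.finite_univ_iff.mp huniv)
end

section
/- Let G be a simple graph that is connected and has no cutvertex, and suppose G contains a one-way infinite simple path with vertices a₁, a₂, a₃, … . Then there are infinitely many distinct simple paths in G joining a₁ to a₂. -/
open SimpleGraph

/-- First-hit lemma: walking from `u ∉ S` to `w ∈ S`, there is an initial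
segment of the walk hitting `S` exactly once, at its endpoint. -/
private lemma exists_prefix_firstHit {V : Type*} {G : SimpleGraph V} (S : Set V) :
    ∀ {u w : V} (q : G.Walk u w), q.IsPath → u ∉ S → w ∈ S →
      ∃ x, x ∈ S ∧ ∃ q' : G.Walk u x, q'.IsPath ∧
        (∀ y ∈ q'.support, y ∈ q.support) ∧ (∀ y ∈ q'.support, y ∈ S → y = x) := by
  intro u w q
  induction q with
  | nil => intro _ hu hw; exact absurd hw hu
  | @cons u v w h p ih =>
    intro hq hu hw
    by_cases hv : v ∈ S
    · refine ⟨v, hv, Walk.cons h Walk.nil, ?_, ?_, ?_⟩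
      · simp [Walk.isPath_def, h.ne]
      · intro y hy
        simp only [Walk.support_cons, Walk.support_nil, List.mem_cons,
          List.not_mem_nil, or_false] at hy
        rw [Walk.support_cons]
        rcases hy with rfl | rfl
        · exact List.mem_cons_self
        · exact List.mem_cons_of_mem _ p.start_mem_support
      · intro y hy hyS
        simp only [Walk.support_cons, Walk.support_nil, List.mem_cons,
          List.mem_singleton, List.not_mem_nil, or_false] at hy
        rcases hy with rfl | rfl
        · exact absurd hyS hu
        · rfl
    · have hp : p.IsPath := ((Walk.cons_isPath_iff _ _).mp hq).1
      obtain ⟨x, hxS, q', hq', hsub, hfirst⟩ := ih hp hv hw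
      refine ⟨x, hxS, Walk.cons h q', ?_, ?_, ?_⟩
      · rw [Walk.cons_isPath_iff]
        exact ⟨hq', fun hmem => ((Walk.cons_isPath_iff _ _).mp hq).2 (hsub _ hmem)⟩
      · intro y hy
        rw [Walk.support_cons] at hy ⊢
        rcases List.mem_cons.mp hy with hy | hy
        · exact hy ▸ List.mem_cons_self
        · exact List.mem_cons_of_mem _ (hsub _ hy)
      · intro y hy hyS
        rw [Walk.support_cons] at hy
        rcases List.mem_cons.mp hy with rfl | hy
        · exact absurd hyS hu
        · exact hfirst y hy hyS

/-- Core of ear splicing: concatenation of three suitably disjoint paths is a path. -/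
private lemma splice_core {V : Type*} {G : SimpleGraph V} {s u v t : V}
    (A : G.Walk s u) (E : G.Walk u v) (B : G.Walk v t)
    (hA : A.IsPath) (hE : E.IsPath) (hB : B.IsPath)
    (hAB : ∀ y ∈ A.support, y ∉ B.support)
    (hEA : ∀ y ∈ E.support, y ∈ A.support → y = u)
    (hEB : ∀ y ∈ E.support, y ∈ B.support → y = v) :
    (A.append (E.append B)).IsPath := by
  have hEs : E.support = u :: E.support.tail := E.support_eq_cons
  have hBs : B.support = v :: B.support.tail := B.support_eq_cons
  rw [Walk.isPath_def, Walk.support_append, Walk.support_append]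
  have htail : (E.support ++ B.support.tail).tail = E.support.tail ++ B.support.tail := by
    conv_lhs => rw [hEs]
    rfl
  rw [htail, List.nodup_append]
  have hEnd : (u :: E.support.tail).Nodup := hEs ▸ hE.support_nodup
  have hBnd : (v :: B.support.tail).Nodup := hBs ▸ hB.support_nodup
  refine ⟨hA.support_nodup, ?_, ?_⟩
  · rw [List.nodup_append]
    refine ⟨(List.nodup_cons.mp hEnd).2, (List.nodup_cons.mp hBnd).2, ?_⟩
    intro y hyE z hyB hyz; rw [← hyz] at hyB
    have h1 : y ∈ E.support := by rw [hEs]; exact List.mem_cons_of_mem _ hyE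
    have h2 : y ∈ B.support := by rw [hBs]; exact List.mem_cons_of_mem _ hyB
    have := hEB y h1 h2
    subst this
    exact (List.nodup_cons.mp hBnd).1 hyB
  · intro y hyA z hy hyz; rw [← hyz] at hy
    rcases List.mem_append.mp hy with hyE | hyB
    · have h1 : y ∈ E.support := by rw [hEs]; exact List.mem_cons_of_mem _ hyE
      have := hEA y h1 hyA
      subst this
      exact (List.nodup_cons.mp hEnd).1 hyE
    · have h2 : y ∈ B.support := by rw [hBs]; exact List.mem_cons_of_mem _ hyB
      exact hAB y hyA h2

/-- Splicing an "ear" `E` (internally disjoint from a path `P`, with both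
endpoints on `P`) into `P` yields a path with the same endpoints containing
all of `E`. -/
private lemma splice {V : Type*} {G : SimpleGraph V} {s t u v : V}
    (P : G.Walk s t) (hP : P.IsPath)
    (hu : u ∈ P.support) (hv : v ∈ P.support) (huv : u ≠ v)
    (E : G.Walk u v) (hE : E.IsPath)
    (hint : ∀ y ∈ E.support, y ∈ P.support → y = u ∨ y = v) :
    ∃ P' : G.Walk s t, P'.IsPath ∧ ∀ y ∈ E.support, y ∈ P'.support := by
  obtain ⟨A, B, rfl⟩ := Walk.mem_support_iff_exists_append.mp hu
  rcases (Walk.mem_support_append_iff _ _).mp hv with hvA | hvB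
  · -- v lies on A : s → u ; use E.reverse
    obtain ⟨A1, A2, rfl⟩ := Walk.mem_support_iff_exists_append.mp hvA
    -- P = (A1.append A2).append B,  A1 : s → v, A2 : v → u, B : u → t
    have hnd := hP.support_nodup
    rw [Walk.support_append, Walk.support_append] at hnd
    obtain ⟨hnd12, hndB, hd12B⟩ := List.nodup_append.mp hnd
    obtain ⟨hndA1, hndA2t, hdA12⟩ := List.nodup_append.mp hnd12
    have hA1 : A1.IsPath := (hP.of_append_left).of_append_left
    have hB : B.IsPath := hP.of_append_right
    have hA2s : A2.support = v :: A2.support.tail := A2.support_eq_cons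
    have hBs : B.support = u :: B.support.tail := B.support_eq_cons
    have huA2t : u ∈ A2.support.tail := by
      have := A2.end_mem_support
      rw [hA2s] at this
      rcases List.mem_cons.mp this with h' | h'
      · exact absurd h' huv
      · exact h'
    have huA1 : u ∉ A1.support := fun hc => hdA12 _ hc _ huA2t rfl
    have hvB' : v ∉ B.support := by
      intro hc
      rw [hBs] at hc
      rcases List.mem_cons.mp hc with h' | h'
      · exact huv h'.symm
      · have h2 : v ∈ A1.support ++ A2.support.tail := by
          have h3 := hvA
          rwa [Walk.support_append] at h3
        exact hd12B _ h2 _ h' rfl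
    refine ⟨A1.append (E.reverse.append B), splice_core A1 E.reverse B hA1 (hE.reverse) hB ?_ ?_ ?_, ?_⟩
    · intro y hyA1 hyB
      rw [hBs] at hyB
      rcases List.mem_cons.mp hyB with rfl | h'
      · exact huA1 hyA1
      · exact hd12B _ (List.mem_append.mpr (Or.inl hyA1)) _ h' rfl
    · intro y hy hyA1
      rw [Walk.support_reverse, List.mem_reverse] at hy
      have hyP : y ∈ ((A1.append A2).append B).support := by
        rw [Walk.mem_support_append_iff, Walk.mem_support_append_iff]
        exact Or.inl (Or.inl hyA1)
      rcases hint y hy hyP with rfl | rfl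
      · exact absurd hyA1 huA1
      · rfl
    · intro y hy hyB
      rw [Walk.support_reverse, List.mem_reverse] at hy
      have hyP : y ∈ ((A1.append A2).append B).support := by
        rw [Walk.mem_support_append_iff]
        exact Or.inr hyB
      rcases hint y hy hyP with rfl | rfl
      · rfl
      · exact absurd hyB hvB'
    · intro y hy
      rw [Walk.mem_support_append_iff, Walk.mem_support_append_iff, Walk.support_reverse,
        List.mem_reverse]
      exact Or.inr (Or.inl hy)
  · -- v lies on B : u → t
    obtain ⟨C, D, rfl⟩ := Walk.mem_support_iff_exists_append.mp hvB
    -- P = A.append (C.append D), A : s → u, C : u → v, D : v → t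
    have hP' : ((A.append C).append D).IsPath := by
      rw [← Walk.append_assoc]; exact hP
    have hnd := hP'.support_nodup
    rw [Walk.support_append, Walk.support_append] at hnd
    obtain ⟨hnd12, hndD, hd12D⟩ := List.nodup_append.mp hnd
    obtain ⟨hndA, hndCt, hdAC⟩ := List.nodup_append.mp hnd12
    have hA : A.IsPath := hP.of_append_left
    have hD : D.IsPath := hP.of_append_right.of_append_right
    have hCs : C.support = u :: C.support.tail := C.support_eq_cons
    have hDs : D.support = v :: D.support.tail := D.support_eq_cons
    have hvCt : v ∈ C.support.tail := by
      have := C.end_mem_support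
      rw [hCs] at this
      rcases List.mem_cons.mp this with h' | h'
      · exact absurd h'.symm huv
      · exact h'
    have hvA : v ∉ A.support := fun hc => hdAC _ hc _ hvCt rfl
    have huD : u ∉ D.support := by
      intro hc
      rw [hDs] at hc
      rcases List.mem_cons.mp hc with h' | h'
      · exact huv h'
      · exact hd12D _ (List.mem_append.mpr (Or.inl A.end_mem_support)) _ h' rfl
    refine ⟨A.append (E.append D), splice_core A E D hA hE hD ?_ ?_ ?_, ?_⟩
    · intro y hyA hyD
      rw [hDs] at hyD
      rcases List.mem_cons.mp hyD with rfl | h'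
      · exact hvA hyA
      · exact hd12D _ (List.mem_append.mpr (Or.inl hyA)) _ h' rfl
    · intro y hy hyA
      have hyP : y ∈ (A.append (C.append D)).support := by
        rw [Walk.mem_support_append_iff]
        exact Or.inl hyA
      rcases hint y hy hyP with rfl | rfl
      · rfl
      · exact absurd hyA hvA
    · intro y hy hyD
      have hyP : y ∈ (A.append (C.append D)).support := by
        rw [Walk.mem_support_append_iff, Walk.mem_support_append_iff]
        exact Or.inr (Or.inr hyD)
      rcases hint y hy hyP with rfl | rfl
      · exact absurd hyD huD
      · rfl
    · intro y hy
      rw [Walk.mem_support_append_iff, Walk.mem_support_append_iff]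
      exact Or.inr (Or.inl hy)

/-- If a connected simple graph without cutvertices contains a one-way
infinite simple path `a 0, a 1, a 2, …`, then there are infinitely many
distinct simple paths joining `a 0` to `a 1`. -/
theorem infinitely_many_paths_of_no_cutvertex
    {V : Type*} (G : SimpleGraph V)
    (hconn : G.Connected)
    (hcut : ∀ v : V, ¬ IsCutvertex G v)
    (a : ℕ → V) (hinj : Function.Injective a)
    (hadj : ∀ i : ℕ, G.Adj (a i) (a (i + 1))) :
    {p : G.Walk (a 0) (a 1) | p.IsPath}.Infinite := by
  have key : ∀ n : ℕ, ∃ p : G.Walk (a 0) (a 1), p.IsPath ∧ ∃ m, n ≤ m ∧ a m ∈ p.support := by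
    intro n
    induction n with
    | zero =>
      refine ⟨Walk.cons (hadj 0) Walk.nil, ?_, 0, le_refl _, Walk.start_mem_support _⟩
      simp [Walk.isPath_def, (hadj 0).ne]
    | succ n ih =>
      obtain ⟨P, hP, m, hm, hmem⟩ := ih
      by_cases hbig : ∃ k, n + 1 ≤ k ∧ a k ∈ P.support
      · obtain ⟨k, hk1, hk2⟩ := hbig
        exact ⟨P, hP, k, hk1, hk2⟩
      push_neg at hbig
      -- then m = n and a n ∈ P.support
      have hmn : m = n := by
        by_contra hne
        exact hbig m (by omega) hmem
      subst hmn
      -- n ≥ 1 since a 1 ∈ P.support always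
      have hn1 : 1 ≤ m := by
        by_contra hc
        have : m + 1 ≤ 1 := by omega
        exact hbig 1 this P.end_mem_support
      -- no cutvertex at a m : get a path from a (m+1) to a 0 avoiding a m
      have h1 := hcut (a m)
      rw [IsCutvertex] at h1
      push_neg at h1
      obtain ⟨q, hq, hqn⟩ :=
        h1 (a (m + 1)) (a 0) (hinj.ne (by omega)) (hinj.ne (by omega))
          (hconn.preconnected _ _) (hconn.preconnected _ _)
      -- first hit of P.support along q
      obtain ⟨x, hxS, q', hq', hsub, hfirst⟩ :=
        exists_prefix_firstHit {y | y ∈ P.support} q hq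
          (hbig (m + 1) (le_refl _)) P.start_mem_support
      have hq'avoid : a m ∉ q'.support := fun hc => hqn (hsub _ hc)
      -- the ear E : a m → x
      have hxm : a m ≠ x := by
        intro hc
        exact hq'avoid (hc ▸ q'.end_mem_support)
      refine ?_
      have hE : (Walk.cons (hadj m) q').IsPath := by
        rw [Walk.cons_isPath_iff]
        exact ⟨hq', hq'avoid⟩
      have hint : ∀ y ∈ (Walk.cons (hadj m) q').support, y ∈ P.support → y = a m ∨ y = x := by
        intro y hy hyP
        rw [Walk.support_cons] at hy
        rcases List.mem_cons.mp hy with rfl | hy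
        · exact Or.inl rfl
        · exact Or.inr (hfirst y hy hyP)
      obtain ⟨P', hP', hEsub⟩ :=
        splice P hP hmem hxS hxm (Walk.cons (hadj m) q') hE hint
      refine ⟨P', hP', m + 1, le_refl _, ?_⟩
      apply hEsub
      rw [Walk.support_cons]
      exact List.mem_cons_of_mem _ q'.start_mem_support
  -- conclude infinitude
  by_contra hfin
  rw [Set.not_infinite] at hfin
  have hT : (⋃ p ∈ {p : G.Walk (a 0) (a 1) | p.IsPath}, {y | y ∈ p.support}).Finite :=
    hfin.biUnion fun p _ => p.support.finite_toSet
  have hpre : (a ⁻¹' (⋃ p ∈ {p : G.Walk (a 0) (a 1) | p.IsPath}, {y | y ∈ p.support})).Finite :=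
    hT.preimage (hinj.injOn)
  obtain ⟨N, hN⟩ := hpre.bddAbove
  obtain ⟨p, hp, m, hm, hmem⟩ := key (N + 1)
  have hmT : m ∈ a ⁻¹' (⋃ p ∈ {p : G.Walk (a 0) (a 1) | p.IsPath}, {y | y ∈ p.support}) := by
    simp only [Set.mem_preimage, Set.mem_iUnion]
    exact ⟨p, hp, hmem⟩
  have := hN hmT
  omega
end

section
/- Let α, β, n be natural numbers with 0 < α < β, let p := α/β, and let k := βⁿ. Then there exists a function f : Fin k → (Fin n → Bool) such that the push-forward under f of the uniform probability measure on Fin k equals the product over Fin n of the Bernoulli(p) measure on Bool (assigning probability p to true and 1−p to false). -/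
open MeasureTheory

/-- Let `0 < α < β`, `p := α/β` and `k := βⁿ`.  Then there is a function
`f : Fin k → (Fin n → Bool)` pushing the uniform probability measure on
`Fin k` forward to the product over `Fin n` of the Bernoulli(`p`) measure on
`Bool`. -/
theorem exists_map_uniform_to_bernoulli_product
    (α β n : ℕ) (hα : 0 < α) (hαβ : α < β) :
    ∃ f : Fin (β ^ n) → (Fin n → Bool),
      Measure.map f ((((β ^ n : ℕ) : ENNReal))⁻¹ • Measure.count) =
        Measure.pi (fun _ : Fin n =>
          ((α : ENNReal) / (β : ENNReal)) • Measure.dirac true +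
            (1 - (α : ENNReal) / (β : ENNReal)) • Measure.dirac false) := by
  classical
  have hβ : 0 < β := hα.trans hαβ
  refine ⟨fun k i => decide ((finFunctionFinEquiv.symm k i : ℕ) < α), ?_⟩
  haveI : ∀ i : Fin n, IsFiniteMeasure
      (((α : ENNReal) / β) • Measure.dirac true + (1 - (α : ENNReal) / β) • Measure.dirac false) := by
    intro i
    constructor
    have h1 : (α : ENNReal)/β ≠ ⊤ := by
      exact (ENNReal.div_lt_top (ENNReal.natCast_ne_top α) (by exact_mod_cast hβ.ne')).ne
    simp only [Measure.coe_add, Measure.coe_smul, Pi.add_apply, Pi.smul_apply, smul_eq_mul,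
      measure_univ, mul_one]
    exact ENNReal.add_lt_top.2 ⟨h1.lt_top, (tsub_le_self.trans_lt (by simp : (1:ENNReal) < ⊤))⟩
  apply Measure.ext_of_singleton
  intro x
  rw [Measure.map_apply (measurable_of_finite _) (measurableSet_singleton x)]
  have hsing : ({x} : Set (Fin n → Bool)) = Set.pi Set.univ (fun i => {x i}) := by
    simp [Set.univ_pi_singleton]
  rw [hsing, Measure.pi_pi]
  -- RHS factors
  have hfac : ∀ i : Fin n,
      (((α : ENNReal) / β) • Measure.dirac true +
        (1 - (α : ENNReal) / β) • Measure.dirac false) ({x i}) =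
      (if x i then (α : ENNReal) else (β - α : ℕ)) / β := by
    intro i
    have h1 : (1 : ENNReal) - (α : ENNReal)/β = ((β - α : ℕ) : ENNReal) / β := by
      rw [ENNReal.natCast_sub, ENNReal.sub_div (by intro _ _; exact_mod_cast hβ.ne') ,
        ENNReal.div_self (by exact_mod_cast hβ.ne') (ENNReal.natCast_ne_top β)]
    cases hxi : x i <;> simp [hxi, h1]
  simp only [hfac]
  -- LHS computation
  set e := (finFunctionFinEquiv : (Fin n → Fin β) ≃ Fin (β ^ n)) with he
  set S : Set (Fin n → Fin β) := Set.univ.pi (fun i => {j : Fin β | decide ((j : ℕ) < α) = x i})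
    with hS
  have hpre : (fun k i => decide ((finFunctionFinEquiv.symm k i : ℕ) < α)) ⁻¹'
      (Set.univ.pi fun i => {x i}) = e '' S := by
    rw [Equiv.image_eq_preimage_symm]
    ext k
    simp only [Set.mem_preimage, Set.mem_pi, Set.mem_univ, true_implies,
      Set.mem_singleton_iff, Set.mem_setOf_eq, hS, funext_iff, he]
  have hcoord : ∀ i : Fin n,
      Nat.card {j : Fin β // decide ((j : ℕ) < α) = x i} =
        (if x i then α else β - α) := by
    intro i
    rw [Nat.card_eq_fintype_card]
    cases hxi : x i
    · simp only [hxi, if_false, decide_eq_false_iff_not]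
      rw [Fintype.card_subtype_compl]
      congr 1
      · simp [Fintype.card_fin]
      · rw [Fintype.card_congr (Equiv.subtypeEquivRight (q := fun j : Fin β => j ∈ Set.Iio (⟨α, hαβ⟩ : Fin β)) (fun j => by simp [Fin.lt_def]))]
        rw [← Set.toFinset_card, Set.toFinset_Iio, Fin.card_Iio]
    · simp only [hxi, if_true, decide_eq_true_eq]
      rw [Fintype.card_congr (Equiv.subtypeEquivRight (q := fun j : Fin β => j ∈ Set.Iio (⟨α, hαβ⟩ : Fin β)) (fun j => by simp [Fin.lt_def]))]
      rw [← Set.toFinset_card, Set.toFinset_Iio, Fin.card_Iio]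
  have hcard : Nat.card (e '' S) = ∏ i : Fin n, (if x i then α else β - α) := by
    rw [Nat.card_image_of_injective e.injective,
      Nat.card_congr (Equiv.Set.univPi _), Nat.card_pi]
    exact Finset.prod_congr rfl fun i _ => hcoord i
  have hfin : (e '' S).Finite := Set.toFinite _
  rw [Measure.smul_apply, hpre, Measure.count_apply_finite _ hfin,
    ← Nat.card_eq_card_finite_toFinset hfin, hcard]
  -- arithmetic
  rw [Nat.cast_prod, Nat.cast_pow, smul_eq_mul, ENNReal.inv_pow,
    ← Fin.prod_const, ← Finset.prod_mul_distrib]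
  refine Finset.prod_congr rfl fun i _ => ?_
  rw [div_eq_mul_inv, mul_comm]
  cases hxi : x i <;> simp [hxi]
end
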